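/- Let P be a strictly positive probability mass function on a finite set S and P̂₁, P̂₂ strictly positive probability mass functions on S with P̂₁ ≠ P̂₂. Then the geometric-mean ensemble P̄ of P̂₁ and P̂₂ satisfies KL(P‖P̄) < (1/2)(KL(P‖P̂₁) + KL(P‖P̂₂)): the ensemble strictly improves on the average expert whenever the experts disagree. -/
import Mathlib


open Real Finset

lemma sqrt_mul_le_half_add {a b : ℝ} (ha : 0 < a) (hb : 0 < b) :
    Real.sqrt (a * b) ≤ (a + b) / 2 := by
  rw [Real.sqrt_mul ha.le]
  nlinarith [sq_nonneg (Real.sqrt a - Real.sqrt b), Real.sq_sqrt ha.le, Real.sq_sqrt hb.le,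
    Real.sqrt_nonneg a, Real.sqrt_nonneg b]

lemma sqrt_mul_lt_half_add {a b : ℝ} (ha : 0 < a) (hb : 0 < b) (hab : a ≠ b) :
    Real.sqrt (a * b) < (a + b) / 2 := by
  rw [Real.sqrt_mul ha.le]
  have h : Real.sqrt a ≠ Real.sqrt b := fun h => hab (by
    have := congrArg (fun x => x ^ 2) h
    simpa [Real.sq_sqrt ha.le, Real.sq_sqrt hb.le] using this)
  have h2 : 0 < (Real.sqrt a - Real.sqrt b) ^ 2 := pow_two_pos_of_ne_zero (sub_ne_zero.mpr h)
  nlinarith [Real.sq_sqrt ha.le, Real.sq_sqrt hb.le]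

/-- With two disagreeing experts, the geometric-mean ensemble strictly improves
on the average expert. -/
theorem kl_geomMean_two_experts_lt
    {S : Type*} [Fintype S] [Nonempty S]
    (P Q₁ Q₂ : S → ℝ)
    (hP : ∀ s, 0 < P s) (hP1 : ∑ s, P s = 1)
    (hQ₁ : ∀ s, 0 < Q₁ s) (hQ₁1 : ∑ s, Q₁ s = 1)
    (hQ₂ : ∀ s, 0 < Q₂ s) (hQ₂1 : ∑ s, Q₂ s = 1)
    (hne : Q₁ ≠ Q₂)
    (Z : ℝ) (hZ : Z = ∑ u, Real.sqrt (Q₁ u * Q₂ u))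
    (Pbar : S → ℝ) (hPbar : ∀ s, Pbar s = (1 / Z) * Real.sqrt (Q₁ s * Q₂ s)) :
    ∑ s, P s * Real.log (P s / Pbar s)
      < (1 / 2) * (∑ s, P s * Real.log (P s / Q₁ s)
          + ∑ s, P s * Real.log (P s / Q₂ s)) := by
  have hZpos : 0 < Z := by
    rw [hZ]
    apply Finset.sum_pos (fun u _ => Real.sqrt_pos.mpr (mul_pos (hQ₁ u) (hQ₂ u))) univ_nonempty
  obtain ⟨t, ht⟩ : ∃ t, Q₁ t ≠ Q₂ t := by
    by_contra h; push_neg at h; exact hne (funext h)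
  have hZlt1 : Z < 1 := by
    have : Z < ∑ u, (Q₁ u + Q₂ u) / 2 := by
      rw [hZ]
      refine Finset.sum_lt_sum (fun u _ => sqrt_mul_le_half_add (hQ₁ u) (hQ₂ u))
        ⟨t, Finset.mem_univ t, sqrt_mul_lt_half_add (hQ₁ t) (hQ₂ t) ht⟩
    have h2 : ∑ u, (Q₁ u + Q₂ u) / 2 = 1 := by
      rw [← Finset.sum_div, Finset.sum_add_distrib, hQ₁1, hQ₂1]; norm_num
    linarith
  have hlogZ : Real.log Z < 0 := Real.log_neg hZpos hZlt1
  have key : ∑ s, P s * Real.log (P s / Pbar s)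
      = (1 / 2) * (∑ s, P s * Real.log (P s / Q₁ s)
          + ∑ s, P s * Real.log (P s / Q₂ s)) + Real.log Z := by
    have hrw : ∀ s, P s * Real.log (P s / Pbar s)
        = (1 / 2) * (P s * Real.log (P s / Q₁ s) + P s * Real.log (P s / Q₂ s))
          + P s * Real.log Z := by
      intro s
      have hq12 : 0 < Q₁ s * Q₂ s := mul_pos (hQ₁ s) (hQ₂ s)
      have hsq : 0 < Real.sqrt (Q₁ s * Q₂ s) := Real.sqrt_pos.mpr hq12
      have hpb : Real.log (Pbar s) = -Real.log Z + (1/2) * (Real.log (Q₁ s) + Real.log (Q₂ s)) := by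
        rw [hPbar s, Real.log_mul (one_div_pos.mpr hZpos).ne' hsq.ne', one_div, Real.log_inv,
          Real.log_sqrt hq12.le, Real.log_mul (hQ₁ s).ne' (hQ₂ s).ne']
        ring
      rw [Real.log_div (hP s).ne' (by rw [hPbar s]; exact (mul_pos (one_div_pos.mpr hZpos) hsq).ne'),
        Real.log_div (hP s).ne' (hQ₁ s).ne', Real.log_div (hP s).ne' (hQ₂ s).ne', hpb]
      ring
    rw [Finset.sum_congr rfl (fun s _ => hrw s)]
    rw [Finset.sum_add_distrib, ← Finset.mul_sum, ← Finset.sum_mul, hP1,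
      Finset.sum_add_distrib]
    ring
  linarith
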